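/- For all integers k ≥ 1 and n ≥ 1, there exists a universal cycle for the set of monotone k-letter words over the linearly ordered alphabet Fin n, where a word w : Fin k → Fin n is called monotone if it has a cyclic rotation that is non-decreasing, i.e., there exists r such that the word i ↦ w((i + r) mod k) is monotone non-decreasing. -/

import Mathlib

/- The finite set of words of length `k` over a finite alphabet `A`
satisfying a predicate `P`. -/
open Classical in
noncomputable def wordsOf {A : Type*} [Fintype A] {k : ℕ} (P : (Fin k → A) → Prop) :
    Finset (Fin k → A) :=
  Finset.univ.filter P

/-- A nonempty finite set `S` of words of length `k` over `A` admits a universal cycle: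
a function `c : ZMod S.card → A` such that `i ↦ (fun j => c (i + j))` is a bijection
from `ZMod S.card` onto `S`. -/
def HasUCycle {A : Type*} {k : ℕ} (S : Finset (Fin k → A)) : Prop :=
  ∃ c : ZMod S.card → A,
    Set.BijOn (fun i : ZMod S.card => fun j : Fin k => c (i + (j.val : ZMod S.card)))
      Set.univ ↑S

namespace UC

variable {k n : ℕ}

abbrev W (k n : ℕ) := Fin k → Fin n

def rotW (w : W k n) : W k n :=
  fun i => w ⟨(i.val + 1) % k, Nat.mod_lt _ (Nat.lt_of_le_of_lt (Nat.zero_le _) i.isLt)⟩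

def NxtW (u z : W k n) : Prop := ∀ (i : ℕ) (h : i + 1 < k),
  z ⟨i, by omega⟩ = u ⟨i + 1, h⟩

def SameSuf (u u' : W k n) : Prop := ∀ i : Fin k, 0 < i.val → u i = u' i

lemma sameSuf_refl (u : W k n) : SameSuf u u := fun _ _ => rfl
lemma sameSuf_symm {u u' : W k n} (h : SameSuf u u') : SameSuf u' u := fun i hi => (h i hi).symm

lemma rotW_iter (r : ℕ) (w : W k n) :
    rotW^[r] w = fun i => w ⟨(i.val + r) % k,
      Nat.mod_lt _ (Nat.lt_of_le_of_lt (Nat.zero_le _) i.isLt)⟩ := by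
  induction r generalizing w with
  | zero =>
    funext i
    simp [Nat.mod_eq_of_lt i.isLt]
  | succ r ih =>
    rw [Function.iterate_succ_apply, ih]
    funext i
    simp only [rotW]
    congr 1
    apply Fin.ext
    show ((i.val + r) % k + 1) % k = (i.val + (r+1)) % k
    rw [Nat.mod_add_mod, Nat.add_assoc]

lemma rotW_iter_apply (r : ℕ) (w : W k n) (i : Fin k) :
    rotW^[r] w i = w ⟨(i.val + r) % k,
      Nat.mod_lt _ (Nat.lt_of_le_of_lt (Nat.zero_le _) i.isLt)⟩ := by
  rw [rotW_iter]

lemma rotW_iter_k (w : W k n) : rotW^[k] w = w := by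
  funext i
  rw [rotW_iter_apply]
  congr 1
  apply Fin.ext
  simp [Nat.add_mod_right, Nat.mod_eq_of_lt i.isLt]

lemma rotW_injective : Function.Injective (rotW : W k n → W k n) := by
  intro u v h
  have : rotW^[k-1] (rotW u) = rotW^[k-1] (rotW v) := by rw [h]
  rcases Nat.eq_zero_or_pos k with hk | hk
  · funext i; exact absurd i.isLt (by omega)
  · rwa [← Function.iterate_succ_apply, ← Function.iterate_succ_apply,
      Nat.succ_eq_add_one, Nat.sub_add_cancel hk, rotW_iter_k, rotW_iter_k] at this

lemma nxtW_rotW (u : W k n) : NxtW u (rotW u) := by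
  intro i h
  simp only [rotW]
  congr 1
  apply Fin.ext
  simp [Nat.mod_eq_of_lt h]

lemma nxtW_of_sameSuf {u u' z : W k n} (hs : SameSuf u u') (hz : NxtW u' z) : NxtW u z := by
  intro i h
  rw [hz i h]
  exact (hs ⟨i+1, h⟩ (Nat.succ_pos i)).symm

lemma sameSuf_of_nxt_nxt {u u' z : W k n} (h1 : NxtW u z) (h2 : NxtW u' z) : SameSuf u u' := by
  intro i hi
  obtain ⟨j, hj⟩ : ∃ j, i.val = j + 1 := ⟨i.val - 1, by omega⟩
  have hjk : j + 1 < k := hj ▸ i.isLt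
  have h1' := h1 j hjk
  have h2' := h2 j hjk
  rw [show i = ⟨j+1, hjk⟩ from Fin.ext hj]
  rw [← h1', h2']

-- rotW u is the unique word z with NxtW u z and given last letter; also:
lemma sameSuf_rot_inv {u z : W k n} (hk : 0 < k) (hz : NxtW u z) :
    SameSuf u (rotW^[k-1] z) := by
  intro i hi
  rw [rotW_iter_apply]
  have hlt : i.val - 1 < k := by omega
  have : (i.val + (k-1)) % k = i.val - 1 := by
    have : i.val + (k - 1) = (i.val - 1) + k := by omega
    rw [this, Nat.add_mod_right, Nat.mod_eq_of_lt hlt]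
  have hz' := hz (i.val - 1) (by omega)
  have heq : (⟨(i.val + (k-1)) % k, Nat.mod_lt _ (Nat.lt_of_le_of_lt (Nat.zero_le _) i.isLt)⟩ : Fin k) = ⟨i.val - 1, hlt⟩ := Fin.ext this
  rw [heq, hz']
  congr 1
  exact Fin.ext (by simp; omega)


/-! ### Abstract single-cycle machinery -/

lemma sameCycle_swap_of_avoid {α : Type*} [Finite α] [DecidableEq α] (σ : Equiv.Perm α) (a b : α)
    (hb : ∀ j : ℕ, (σ ^ j) (σ a) ≠ b) :
    Equiv.Perm.SameCycle (σ * Equiv.swap a b) (σ a) a := by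
  have hex : ∃ t, (σ ^ t) (σ a) = a := by
    refine ⟨orderOf σ - 1, ?_⟩
    have h1 : (σ ^ (orderOf σ - 1)) (σ a) = (σ ^ (orderOf σ - 1) * σ) a := rfl
    rw [h1, ← pow_succ, Nat.sub_add_cancel (orderOf_pos σ), pow_orderOf_eq_one]
    rfl
  have key : ∀ j, j ≤ Nat.find hex →
      Equiv.Perm.SameCycle (σ * Equiv.swap a b) (σ a) ((σ ^ j) (σ a)) := by
    intro j hj
    induction j with
    | zero => simpa using Equiv.Perm.SameCycle.refl _ _
    | succ j ihj =>
      have hja : (σ ^ j) (σ a) ≠ a := by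
        have := Nat.find_min hex (m := j) (by omega)
        exact this
      have ihj' := ihj (by omega)
      refine ihj'.trans ⟨1, ?_⟩
      simp only [zpow_one]
      have hstep : (σ * Equiv.swap a b) ((σ ^ j) (σ a)) = σ ((σ ^ j) (σ a)) := by
        rw [Equiv.Perm.mul_apply, Equiv.swap_apply_of_ne_of_ne hja (hb j)]
      rw [hstep, ← Equiv.Perm.mul_apply, ← pow_succ']
  have := key _ le_rfl
  rwa [Nat.find_spec hex] at this

lemma orbit_grow {α : Type*} [Finite α] [DecidableEq α] (σ : Equiv.Perm α) (u0 a b : α)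
    (ha : σ.SameCycle u0 a) (hb : ¬ σ.SameCycle u0 b) :
    (∀ v, σ.SameCycle u0 v → (σ * Equiv.swap a b).SameCycle u0 v)
    ∧ (σ * Equiv.swap a b).SameCycle u0 b := by
  have hcyc_pow : ∀ (x : α) (t : ℕ), σ.SameCycle x ((σ ^ t) x) := by
    intro x t
    exact ⟨(t : ℤ), by rw [zpow_natCast]⟩
  have hL1 : (σ * Equiv.swap a b).SameCycle (σ a) a := by
    apply sameCycle_swap_of_avoid
    intro j hj
    apply hb
    have hstep : σ.SameCycle a (σ a) := ⟨1, by simp⟩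
    have h1 : σ.SameCycle (σ a) ((σ ^ j) (σ a)) := hcyc_pow _ j
    have : σ.SameCycle a ((σ ^ j) (σ a)) := hstep.trans h1
    exact ha.trans (this.trans (by rw [hj]))
  have hL1b : (σ * Equiv.swap a b).SameCycle (σ b) b := by
    rw [Equiv.swap_comm]
    apply sameCycle_swap_of_avoid
    intro j hj
    apply hb
    have hstep : σ.SameCycle b (σ b) := ⟨1, by simp⟩
    have h1 : σ.SameCycle b ((σ ^ j) (σ b)) := hstep.trans (hcyc_pow _ j)
    rw [hj] at h1
    exact ha.trans h1.symm
  have main : ∀ t : ℕ, (σ * Equiv.swap a b).SameCycle u0 ((σ ^ t) u0) := by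
    intro t
    induction t with
    | zero => simpa using Equiv.Perm.SameCycle.refl _ _
    | succ t iht =>
      have hwmem : σ.SameCycle u0 ((σ ^ t) u0) := hcyc_pow u0 t
      have hwb : (σ ^ t) u0 ≠ b := fun h => hb (h ▸ hwmem)
      have hsucc : (σ ^ (t+1)) u0 = σ ((σ ^ t) u0) := by
        rw [pow_succ', Equiv.Perm.mul_apply]
      by_cases hwa : (σ ^ t) u0 = a
      · rw [hsucc, hwa]
        exact (iht.trans (by rw [hwa])).trans hL1.symm
      · refine iht.trans ⟨1, ?_⟩
        simp only [zpow_one]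
        rw [Equiv.Perm.mul_apply, Equiv.swap_apply_of_ne_of_ne hwa hwb, ← hsucc]
  constructor
  · intro v hv
    obtain ⟨t, _, ht⟩ := hv.exists_pow_eq'
    exact ht ▸ main t
  · have hua : (σ * Equiv.swap a b).SameCycle u0 a := by
      obtain ⟨t, _, ht⟩ := ha.exists_pow_eq'
      exact ht ▸ main t
    refine hua.trans (Equiv.Perm.SameCycle.trans ⟨1, ?_⟩ hL1b)
    simp only [zpow_one, Equiv.Perm.mul_apply, Equiv.swap_apply_left]

section S
variable {S : Finset (W k n)}

def Good (σ : Equiv.Perm {x // x ∈ S}) : Prop := ∀ u : {x // x ∈ S}, NxtW u.1 (σ u).1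

lemma exists_good (hrot : ∀ w ∈ S, rotW w ∈ S) : ∃ σ : Equiv.Perm {x // x ∈ S}, Good σ := by
  classical
  have hinj : Function.Injective
      (fun u : {x // x ∈ S} => (⟨rotW u.1, hrot _ u.2⟩ : {x // x ∈ S})) := by
    intro u v h
    exact Subtype.ext (rotW_injective (congrArg Subtype.val h))
  refine ⟨Equiv.ofBijective _ (Finite.injective_iff_bijective.mp hinj), ?_⟩
  intro u
  exact nxtW_rotW u.1

lemma rot_iter_mem (hrot : ∀ w ∈ S, rotW w ∈ S) (r : ℕ) {w : W k n} (hw : w ∈ S) :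
    rotW^[r] w ∈ S := by
  induction r with
  | zero => exact hw
  | succ r ih => rw [Function.iterate_succ_apply']; exact hrot _ ih

lemma exists_single_cycle (hk : 0 < k) (hrot : ∀ w ∈ S, rotW w ∈ S)
    (w0 : W k n) (hw0 : w0 ∈ S)
    (hconn : ∀ T : Set (W k n), w0 ∈ T → (∀ w ∈ T, rotW w ∈ T) →
      (∀ w ∈ T, ∀ w' ∈ S, SameSuf w w' → w' ∈ T) → ∀ w ∈ S, w ∈ T) :
    ∃ σ : Equiv.Perm {x // x ∈ S}, Good σ ∧ ∀ v, σ.SameCycle ⟨w0, hw0⟩ v := by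
  classical
  set u0 : {x // x ∈ S} := ⟨w0, hw0⟩ with hu0
  obtain ⟨σ₀, hσ₀⟩ := exists_good hrot
  set F : Equiv.Perm {x // x ∈ S} → ℕ :=
    fun σ => (Finset.univ.filter (fun v => σ.SameCycle u0 v)).card with hF
  have hne : (Finset.univ.filter (fun σ : Equiv.Perm {x // x ∈ S} => Good σ)).Nonempty :=
    ⟨σ₀, by simp [hσ₀]⟩
  obtain ⟨σ, hσmem, hσmax⟩ := Finset.exists_max_image _ F hne
  rw [Finset.mem_filter] at hσmem
  have hGood := hσmem.2
  refine ⟨σ, hGood, ?_⟩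
  by_contra hnot
  push_neg at hnot
  obtain ⟨v0, hv0⟩ := hnot
  set O : Finset {x // x ∈ S} := Finset.univ.filter (fun v => σ.SameCycle u0 v) with hO
  have hmemO : ∀ v, v ∈ O ↔ σ.SameCycle u0 v := by
    intro v; simp [hO]
  have hOσ : ∀ v ∈ O, σ v ∈ O := by
    intro v hv
    rw [hmemO] at hv ⊢
    exact hv.trans ⟨1, by simp⟩
  have hOσinv : ∀ v ∈ O, σ⁻¹ v ∈ O := by
    intro v hv
    rw [hmemO] at hv ⊢
    exact hv.trans ⟨-1, by simp⟩
  by_cases hsat : ∀ a ∈ O, ∀ b : {x // x ∈ S}, SameSuf a.1 b.1 → b ∈ O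
  · -- saturated: O is rot-closed and suffix-closed; use connectivity
    have hOUT : ∀ a ∈ O, ∀ z : {x // x ∈ S}, NxtW a.1 z.1 → z ∈ O := by
      intro a ha z hz
      set IN := Finset.univ.filter (fun u : {x // x ∈ S} => SameSuf a.1 u.1) with hIN
      set OUT := Finset.univ.filter (fun z : {x // x ∈ S} => NxtW a.1 z.1) with hOUTd
      have hINO : IN ⊆ O := by
        intro u hu
        simp only [hIN, Finset.mem_filter, Finset.mem_univ, true_and] at hu
        exact hsat a ha u hu
      have hcard1 : IN.card = OUT.card := by
        refine Finset.card_bij (fun u _ => (⟨rotW u.1, hrot _ u.2⟩ : {x // x ∈ S})) ?_ ?_ ?_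
        · intro u hu
          simp only [hIN, hOUTd, Finset.mem_filter, Finset.mem_univ, true_and] at hu ⊢
          exact nxtW_of_sameSuf hu (nxtW_rotW u.1)
        · intro u _ v _ h
          exact Subtype.ext (rotW_injective (congrArg Subtype.val h))
        · intro z' hz'
          simp only [hOUTd, Finset.mem_filter, Finset.mem_univ, true_and] at hz'
          refine ⟨⟨rotW^[k-1] z'.1, rot_iter_mem hrot _ z'.2⟩, ?_, ?_⟩
          · simp only [hIN, Finset.mem_filter, Finset.mem_univ, true_and]
            exact sameSuf_rot_inv hk hz'
          · apply Subtype.ext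
            show rotW (rotW^[k-1] z'.1) = z'.1
            rw [← Function.iterate_succ_apply' rotW (k-1) z'.1, Nat.succ_eq_add_one,
              Nat.sub_add_cancel hk, rotW_iter_k]
      have hcard2 : (O ∩ IN).card = (O ∩ OUT).card := by
        refine Finset.card_bij (fun u _ => σ u) ?_ ?_ ?_
        · intro u hu
          rw [Finset.mem_inter] at hu ⊢
          simp only [hIN, hOUTd, Finset.mem_filter, Finset.mem_univ, true_and] at hu ⊢
          exact ⟨hOσ u hu.1, nxtW_of_sameSuf hu.2 (hGood u)⟩
        · intro u _ v _ h
          exact σ.injective h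
        · intro z' hz'
          rw [Finset.mem_inter] at hz'
          simp only [hOUTd, Finset.mem_filter, Finset.mem_univ, true_and] at hz'
          refine ⟨σ⁻¹ z', ?_, by simp⟩
          rw [Finset.mem_inter]
          simp only [hIN, Finset.mem_filter, Finset.mem_univ, true_and]
          refine ⟨hOσinv z' hz'.1, ?_⟩
          have hNu : NxtW ((σ⁻¹ z') : {x // x ∈ S}).1 z'.1 := by
            have := hGood (σ⁻¹ z')
            rwa [show σ (σ⁻¹ z') = z' from σ.apply_symm_apply z'] at this
          exact sameSuf_of_nxt_nxt hz'.2 hNu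
      have hIN_inter : O ∩ IN = IN := Finset.inter_eq_right.mpr hINO
      have hOUTsub : OUT ⊆ O := by
        have hsub : O ∩ OUT ⊆ OUT := Finset.inter_subset_right
        have hcard3 : OUT.card ≤ (O ∩ OUT).card := by
          rw [← hcard2, hIN_inter, hcard1]
        have := Finset.eq_of_subset_of_card_le hsub hcard3
        rw [← this]
        exact Finset.inter_subset_left
      apply hOUTsub
      simp only [hOUTd, Finset.mem_filter, Finset.mem_univ, true_and]
      exact hz
    set T : Set (W k n) := {w | ∃ h : w ∈ S, (⟨w, h⟩ : {x // x ∈ S}) ∈ O} with hT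
    have hv0T : v0.1 ∈ T := by
      refine hconn T ⟨hw0, by rw [hmemO]⟩ ?_ ?_ v0.1 v0.2
      · rintro w ⟨hwS, hwO⟩
        exact ⟨hrot w hwS, hOUT _ hwO _ (nxtW_rotW w)⟩
      · rintro w ⟨hwS, hwO⟩ w' hw' hsuf
        exact ⟨hw', hsat _ hwO ⟨w', hw'⟩ hsuf⟩
    obtain ⟨h', hmem⟩ := hv0T
    rw [hmemO] at hmem
    exact hv0 (by convert hmem using 2)
  · push_neg at hsat
    obtain ⟨a, haO, b, hsuf, hbO⟩ := hsat
    set σ' := σ * Equiv.swap a b with hσ'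
    have hGood' : Good σ' := by
      intro u
      rcases eq_or_ne u a with rfl | hua
      · have : σ' u = σ b := by simp [hσ']
        rw [this]
        exact nxtW_of_sameSuf hsuf (hGood b)
      · rcases eq_or_ne u b with rfl | hub
        · have : σ' u = σ a := by simp [hσ']
          rw [this]
          exact nxtW_of_sameSuf (sameSuf_symm hsuf) (hGood a)
        · have : σ' u = σ u := by
            simp [hσ', Equiv.Perm.mul_apply, Equiv.swap_apply_of_ne_of_ne hua hub]
          rw [this]
          exact hGood u
    rw [hmemO] at haO
    have hbO' : ¬ σ.SameCycle u0 b := fun h => hbO ((hmemO b).mpr h)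
    obtain ⟨hmono, hbnew⟩ := orbit_grow σ u0 a b haO hbO'
    have hsubset : insert b O ⊆ Finset.univ.filter (fun v => σ'.SameCycle u0 v) := by
      intro v hv
      simp only [Finset.mem_filter, Finset.mem_univ, true_and]
      rcases Finset.mem_insert.mp hv with rfl | hvO
      · exact hbnew
      · exact hmono v ((hmemO v).mp hvO)
    have hcard : F σ < F σ' := by
      have h1 : O.card + 1 ≤ F σ' := by
        rw [← Finset.card_insert_of_notMem hbO]
        exact Finset.card_le_card hsubset
      have h2 : F σ = O.card := rfl
      omega
    have := hσmax σ' (by simp [Finset.mem_filter, hGood'])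
    omega


lemma pow_fix {α : Type*} (σ : Equiv.Perm α) (u : α) {d : ℕ} (hd : (σ ^ d) u = u) (q : ℕ) :
    ((σ ^ d) ^ q) u = u := by
  induction q with
  | zero => simp
  | succ q ih => rw [pow_succ, Equiv.Perm.mul_apply, hd, ih]

lemma pow_mod_fix {α : Type*} (σ : Equiv.Perm α) (u : α) {d : ℕ} (hd : (σ ^ d) u = u)
    (t : ℕ) : (σ ^ t) u = (σ ^ (t % d)) u := by
  conv_lhs => rw [← Nat.mod_add_div t d]
  rw [pow_add, Equiv.Perm.mul_apply, pow_mul, pow_fix σ u hd _]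

lemma first_letter (hk : 0 < k) {σ : Equiv.Perm {x // x ∈ S}} (hGood : Good σ) :
    ∀ (t : ℕ) (ht : t < k) (u : {x // x ∈ S}),
      ((σ ^ t) u).1 ⟨0, hk⟩ = u.1 ⟨t, ht⟩ := by
  intro t
  induction t with
  | zero => intro ht u; rfl
  | succ t ih =>
    intro ht u
    have h1 : (σ ^ (t+1)) u = (σ ^ t) (σ u) := by rw [pow_succ, Equiv.Perm.mul_apply]
    rw [h1, ih (by omega) (σ u)]
    exact hGood u t ht

theorem hasUCycle_of (hk : 0 < k) (hrot : ∀ w ∈ S, rotW w ∈ S)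
    (w0 : W k n) (hw0 : w0 ∈ S)
    (hconn : ∀ T : Set (W k n), w0 ∈ T → (∀ w ∈ T, rotW w ∈ T) →
      (∀ w ∈ T, ∀ w' ∈ S, SameSuf w w' → w' ∈ T) → ∀ w ∈ S, w ∈ T) :
    HasUCycle S := by
  classical
  obtain ⟨σ, hGood, hcyc⟩ := exists_single_cycle hk hrot w0 hw0 hconn
  set u0 : {x // x ∈ S} := (⟨w0, hw0⟩ : {x // x ∈ S}) with hu0
  set m := S.card with hm
  have hmpos : 0 < m := Finset.card_pos.mpr ⟨w0, hw0⟩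
  haveI : NeZero m := ⟨hmpos.ne'⟩
  have hcardS : Fintype.card {x // x ∈ S} = m := Fintype.card_coe S
  have hex : ∃ t, 0 < t ∧ (σ ^ t) u0 = u0 :=
    ⟨orderOf σ, orderOf_pos σ, by rw [pow_orderOf_eq_one]; rfl⟩
  set d := Nat.find hex with hd
  obtain ⟨hdpos, hdfix⟩ := Nat.find_spec hex
  rw [← hd] at hdpos hdfix
  have hsurj : ∀ v : {x // x ∈ S}, ∃ t, t < d ∧ (σ ^ t) u0 = v := by
    intro v
    obtain ⟨t, _, ht⟩ := (hcyc v).exists_pow_eq'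
    refine ⟨t % d, Nat.mod_lt _ hdpos, ?_⟩
    rw [← pow_mod_fix σ u0 hdfix t, ht]
  have hinj0 : ∀ s t : ℕ, s < t → t < d → (σ ^ s) u0 = (σ ^ t) u0 → False := by
    intro s t hst htd hEq
    have h1 : (σ ^ s) ((σ ^ (t - s)) u0) = (σ ^ s) u0 := by
      rw [← Equiv.Perm.mul_apply, ← pow_add]
      rw [show s + (t - s) = t from by omega, hEq]
    have h2 : (σ ^ (t - s)) u0 = u0 := (Equiv.injective _) h1
    exact Nat.find_min hex (m := t - s) (by omega) ⟨by omega, h2⟩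
  have hinj : ∀ s t : ℕ, s < d → t < d → (σ ^ s) u0 = (σ ^ t) u0 → s = t := by
    intro s t hs ht hEq
    rcases lt_trichotomy s t with h | h | h
    · exact absurd (hinj0 s t h ht hEq) (fun x => x)
    · exact h
    · exact absurd (hinj0 t s h hs hEq.symm) (fun x => x)
  have hdm : d = m := by
    have hbij : Function.Bijective (fun t : Fin d => (σ ^ t.1) u0) := by
      constructor
      · intro s t h
        exact Fin.ext (hinj _ _ s.isLt t.isLt h)
      · intro v
        obtain ⟨t, htd, ht⟩ := hsurj v
        exact ⟨⟨t, htd⟩, ht⟩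
    have := Fintype.card_of_bijective hbij
    rwa [Fintype.card_fin, hcardS] at this
  rw [hdm] at hdfix hsurj
  have hinj' : ∀ s t : ℕ, s < m → t < m → (σ ^ s) u0 = (σ ^ t) u0 → s = t := by
    rw [← hdm]; exact hinj
  refine ⟨fun i => ((σ ^ (ZMod.val i)) u0).1 ⟨0, hk⟩, ?_⟩
  set c : ZMod m → Fin n := fun i => ((σ ^ (ZMod.val i)) u0).1 ⟨0, hk⟩ with hc
  have hwindow : ∀ i : ZMod m,
      (fun j : Fin k => c (i + (j.val : ZMod m))) = ((σ ^ (ZMod.val i)) u0).1 := by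
    intro i
    funext j
    have h1 : (i + (j.val : ZMod m)).val = (i.val + j.val % m) % m := by
      rw [ZMod.val_add, ZMod.val_natCast]
    show ((σ ^ (i + (j.val : ZMod m)).val) u0).1 ⟨0, hk⟩ = _
    rw [h1]
    have h2 : (σ ^ ((i.val + j.val % m) % m)) u0 = (σ ^ (j.val)) ((σ ^ (i.val)) u0) := by
      rw [← pow_mod_fix σ u0 hdfix (i.val + j.val % m)]
      rw [pow_add, Equiv.Perm.mul_apply, ← pow_mod_fix σ u0 hdfix j.val,
        ← Equiv.Perm.mul_apply, ← pow_add, add_comm, pow_add, Equiv.Perm.mul_apply]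
    rw [h2, first_letter hk hGood j.val j.isLt ((σ ^ (i.val)) u0)]
  constructor
  · intro i _
    show (fun j : Fin k => c (i + (j.val : ZMod m))) ∈ ↑S
    rw [hwindow i]
    exact Finset.mem_coe.mpr ((σ ^ (ZMod.val i)) u0).2
  constructor
  · intro i _ i' _ hEq
    have hEq' : ((σ ^ (ZMod.val i)) u0).1 = ((σ ^ (ZMod.val i')) u0).1 := by
      rw [← hwindow i, ← hwindow i']
      exact hEq
    have := hinj' i.val i'.val (ZMod.val_lt i) (ZMod.val_lt i') (Subtype.ext hEq')
    exact ZMod.val_injective m this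
  · intro w hw
    obtain ⟨t, htm, ht⟩ := hsurj ⟨w, Finset.mem_coe.mp hw⟩
    refine ⟨(t : ZMod m), Set.mem_univ _, ?_⟩
    show (fun j : Fin k => c ((t : ZMod m) + (j.val : ZMod m))) = w
    rw [hwindow]
    have hv : ((t : ZMod m)).val = t := by
      rw [ZMod.val_natCast, Nat.mod_eq_of_lt htm]
    rw [hv, ht]

end S

/-! ### Monotone words -/

def MonW (hk : 0 < k) (w : W k n) : Prop :=
  ∃ r : ℕ, Monotone fun i : Fin k => w ⟨(i.val + r) % k, Nat.mod_lt _ hk⟩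

lemma mem_wordsOf {P : W k n → Prop} {w : W k n} : w ∈ wordsOf P ↔ P w := by
  simp [wordsOf]

lemma monW_iter (hk : 0 < k) (w : W k n) : MonW hk w ↔ ∃ r, Monotone (rotW^[r] w) := by
  constructor
  · rintro ⟨r, hr⟩
    refine ⟨r, ?_⟩
    rw [rotW_iter]
    exact hr
  · rintro ⟨r, hr⟩
    rw [rotW_iter] at hr
    exact ⟨r, hr⟩

lemma rot_iter_mul_k (q : ℕ) (w : W k n) : rotW^[k * q] w = w := by
  induction q with
  | zero => simp
  | succ q ih =>
    rw [Nat.mul_succ, Function.iterate_add_apply, rotW_iter_k, ih]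

lemma monW_rot (hk : 0 < k) {w : W k n} (hw : MonW hk w) : MonW hk (rotW w) := by
  rw [monW_iter] at hw ⊢
  obtain ⟨r, hr⟩ := hw
  refine ⟨r + (k - 1), ?_⟩
  have h1 : rotW^[(r + (k-1)) + 1] w = rotW^[r + (k-1)] (rotW w) :=
    Function.iterate_succ_apply rotW _ w
  have h2 : (r + (k-1)) + 1 = r + k := by omega
  have h3 : rotW^[r + k] w = rotW^[r] w := by
    rw [Function.iterate_add_apply, rotW_iter_k]
  rw [← h1, h2, h3]
  exact hr

lemma sum_rotW (w : W k n) : ∑ i, (rotW w i).val = ∑ i, (w i).val := by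
  have hg : Function.Bijective (fun i : Fin k =>
      (⟨(i.val + 1) % k, Nat.mod_lt _ (Nat.lt_of_le_of_lt (Nat.zero_le _) i.isLt)⟩ : Fin k)) := by
    rw [← Finite.injective_iff_bijective]
    intro i j hij
    have hij' : (i.val + 1) % k = (j.val + 1) % k := congrArg Fin.val hij
    have hi := i.isLt
    have hj := j.isLt
    have e1 : (i.val + 1) % k = if i.val + 1 = k then 0 else i.val + 1 := by
      split
      · simp_all
      · exact Nat.mod_eq_of_lt (by omega)
    have e2 : (j.val + 1) % k = if j.val + 1 = k then 0 else j.val + 1 := by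
      split
      · simp_all
      · exact Nat.mod_eq_of_lt (by omega)
    rw [e1, e2] at hij'
    apply Fin.ext
    split at hij' <;> split at hij' <;> omega
  exact Function.Bijective.sum_comp hg fun i => (w i).val

lemma sum_rotW_iter (r : ℕ) (w : W k n) :
    ∑ i, ((rotW^[r] w) i).val = ∑ i, (w i).val := by
  induction r generalizing w with
  | zero => rfl
  | succ r ih =>
    rw [Function.iterate_succ_apply, ih, sum_rotW]

lemma rotT_iter {T : Set (W k n)} (hrotT : ∀ w ∈ T, rotW w ∈ T) (r : ℕ)
    {w : W k n} (hw : w ∈ T) : rotW^[r] w ∈ T := by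
  induction r with
  | zero => exact hw
  | succ r ih => rw [Function.iterate_succ_apply']; exact hrotT _ ih

lemma connectivity (hk : 0 < k) (hn : 0 < n) (T : Set (W k n))
    (h0 : (fun _ => (⟨0, hn⟩ : Fin n)) ∈ T)
    (hrotT : ∀ w ∈ T, rotW w ∈ T)
    (hsufT : ∀ w ∈ T, ∀ w' ∈ wordsOf (MonW hk), SameSuf w w' → w' ∈ T) :
    ∀ w ∈ wordsOf (MonW hk), w ∈ T := by
  classical
  have hrotS : ∀ w ∈ wordsOf (MonW hk : W k n → Prop), rotW w ∈ wordsOf (MonW hk : W k n → Prop) :=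
    fun w hw => mem_wordsOf.mpr (monW_rot hk (mem_wordsOf.mp hw))
  have key : ∀ s : ℕ, ∀ w, w ∈ wordsOf (MonW hk) → (∑ i, (w i).val) = s → w ∈ T := by
    intro s
    induction s using Nat.strong_induction_on with
    | _ s ih =>
    intro w hw hsum
    by_cases hzero : ∀ i, w i = ⟨0, hn⟩
    · have : w = fun _ => (⟨0, hn⟩ : Fin n) := funext hzero
      rw [this]
      exact h0
    · push_neg at hzero
      have hspos : 0 < s := by
        rw [← hsum]
        obtain ⟨i0, hi0⟩ := hzero
        apply Finset.sum_pos' (fun _ _ => Nat.zero_le _)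
        refine ⟨i0, Finset.mem_univ _, ?_⟩
        have : (w i0).val ≠ 0 := fun h => hi0 (Fin.ext h)
        omega
      obtain ⟨r, hr⟩ := (monW_iter hk w).mp (mem_wordsOf.mp hw)
      set v := rotW^[r] w with hv
      have hmono : Monotone v := hr
      have hvS : v ∈ wordsOf (MonW hk) := rot_iter_mem hrotS r hw
      have hsumv : ∑ i, (v i).val = s := by rw [hv, sum_rotW_iter, hsum]
      have hback : v ∈ T → w ∈ T := by
        intro hvT
        have hb : r % k < k := Nat.mod_lt _ hk
        have hW : rotW^[k - r % k] v = w := by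
          rw [hv, ← Function.iterate_add_apply]
          have habm : k * (r / k) + r % k = r := Nat.div_add_mod r k
          have h4 : k - r % k + r = k * (r / k + 1) := by
            rw [Nat.mul_succ]
            omega
          rw [h4, rot_iter_mul_k]
        rw [← hW]
        exact rotT_iter hrotT _ hvT
      apply hback
      by_cases hconst : ∀ i, v i = v ⟨0, hk⟩
      · -- v is constant with positive value
        have hv0pos : 0 < (v ⟨0, hk⟩).val := by
          by_contra hcon
          have hv00 : (v ⟨0, hk⟩).val = 0 := by omega
          have hzero' : ∑ i, (v i).val = 0 :=
            Finset.sum_eq_zero fun i _ => by rw [hconst i, hv00]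
          omega
        set v' := Function.update v ⟨0, hk⟩ ⟨0, hn⟩ with hv'
        have hv'S : v' ∈ wordsOf (MonW hk) := by
          rw [mem_wordsOf]
          refine ⟨0, ?_⟩
          have hfun : (fun i : Fin k => v' ⟨(i.val + 0) % k, Nat.mod_lt _ hk⟩) = v' := by
            funext i
            congr 1
            exact Fin.ext (by simp [Nat.mod_eq_of_lt i.isLt])
          rw [hfun]
          intro i j hij
          rcases eq_or_ne i (⟨0, hk⟩ : Fin k) with rfl | hi0
          · rw [hv', Function.update_self]
            exact Fin.le_def.mpr (Nat.zero_le _)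
          · have hj0 : j ≠ (⟨0, hk⟩ : Fin k) := by
              intro hj
              subst hj
              have hvle : i.val ≤ 0 := Fin.le_def.mp hij
              exact hi0 (Fin.ext (show i.val = 0 by omega))
            rw [hv', Function.update_of_ne hi0, Function.update_of_ne hj0, hconst i, hconst j]
        have e1 : ∑ i, (v' i).val
            = (v' ⟨0, hk⟩).val + ∑ i ∈ Finset.univ.erase ⟨0, hk⟩, (v' i).val :=
          (Finset.add_sum_erase _ _ (Finset.mem_univ _)).symm
        have e2 : ∑ i, (v i).val
            = (v ⟨0, hk⟩).val + ∑ i ∈ Finset.univ.erase ⟨0, hk⟩, (v i).val :=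
          (Finset.add_sum_erase _ _ (Finset.mem_univ _)).symm
        have e3 : ∑ i ∈ Finset.univ.erase ⟨0, hk⟩, (v' i).val
            = ∑ i ∈ Finset.univ.erase ⟨0, hk⟩, (v i).val := by
          refine Finset.sum_congr rfl fun x hx => ?_
          rw [hv', Function.update_of_ne (Finset.mem_erase.mp hx).1]
        have e4 : (v' ⟨0, hk⟩).val = 0 := by rw [hv', Function.update_self]
        have hlt' : ∑ i, (v' i).val < s := by omega
        have hv'T : v' ∈ T := ih _ hlt' v' hv'S rfl
        refine hsufT v' hv'T v hvS ?_
        intro i hi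
        have hine : i ≠ (⟨0, hk⟩ : Fin k) := by
          intro h
          rw [h] at hi
          simp at hi
        rw [hv', Function.update_of_ne hine]
      · -- v is monotone nonconstant
        push_neg at hconst
        obtain ⟨i0, hi0ne⟩ := hconst
        have hkm1 : k - 1 < k := by omega
        have h1 : v ⟨0, hk⟩ < v i0 :=
          lt_of_le_of_ne (hmono (Fin.le_def.mpr (Nat.zero_le _))) (Ne.symm hi0ne)
        have h2 : v i0 ≤ v ⟨k-1, hkm1⟩ := by
          apply hmono
          apply Fin.le_def.mpr
          show i0.val ≤ k - 1
          have := i0.isLt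
          omega
        have hlt : v ⟨0, hk⟩ < v ⟨k-1, hkm1⟩ := lt_of_lt_of_le h1 h2
        set u := rotW^[k-1] v with hu
        have huS : u ∈ wordsOf (MonW hk) := rot_iter_mem hrotS _ hvS
        have hu0 : u ⟨0, hk⟩ = v ⟨k-1, hkm1⟩ := by
          rw [hu, rotW_iter_apply]
          congr 1
          exact Fin.ext (by simp [Nat.mod_eq_of_lt hkm1])
        have huj : ∀ (x : Fin k), 0 < x.val → u x = v ⟨x.val - 1, by omega⟩ := by
          intro x hx
          rw [hu, rotW_iter_apply]
          congr 1
          apply Fin.ext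
          show (x.val + (k-1)) % k = x.val - 1
          have h5 : x.val + (k - 1) = (x.val - 1) + k := by omega
          rw [h5, Nat.add_mod_right, Nat.mod_eq_of_lt (by omega)]
        set u' := Function.update u ⟨0, hk⟩ (v ⟨0, hk⟩) with hu'
        have hval : ∀ x : Fin k, 0 < x.val → u' x = v ⟨x.val - 1, by omega⟩ := by
          intro x hx
          have hxne : x ≠ ⟨0, hk⟩ := by
            intro h
            rw [h] at hx
            simp at hx
          rw [hu', Function.update_of_ne hxne]
          exact huj x hx
        have hu'S : u' ∈ wordsOf (MonW hk) := by
          rw [mem_wordsOf]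
          refine ⟨0, ?_⟩
          have hfun : (fun i : Fin k => u' ⟨(i.val + 0) % k, Nat.mod_lt _ hk⟩) = u' := by
            funext i
            congr 1
            exact Fin.ext (by simp [Nat.mod_eq_of_lt i.isLt])
          rw [hfun]
          intro i j hij
          rcases eq_or_ne i (⟨0, hk⟩ : Fin k) with rfl | hi0
          · rcases eq_or_ne j (⟨0, hk⟩ : Fin k) with rfl | hj0
            · exact le_refl _
            · have hjpos : 0 < j.val := by
                rcases Nat.eq_zero_or_pos j.val with h | h
                · exact absurd (Fin.ext h) hj0
                · exact h
              rw [hval j hjpos, hu', Function.update_self]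
              exact hmono (Fin.le_def.mpr (Nat.zero_le _))
          · have hipos : 0 < i.val := by
              rcases Nat.eq_zero_or_pos i.val with h | h
              · exact absurd (Fin.ext h) hi0
              · exact h
            have hjpos : 0 < j.val := by
              have := Fin.le_def.mp hij
              omega
            rw [hval i hipos, hval j hjpos]
            apply hmono
            apply Fin.mk_le_mk.mpr
            have := Fin.le_def.mp hij
            omega
        have hsumu : ∑ i, (u i).val = s := by rw [hu, sum_rotW_iter, hsumv]
        have e1 : ∑ i, (u' i).val
            = (u' ⟨0, hk⟩).val + ∑ i ∈ Finset.univ.erase ⟨0, hk⟩, (u' i).val :=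
          (Finset.add_sum_erase _ _ (Finset.mem_univ _)).symm
        have e2 : ∑ i, (u i).val
            = (u ⟨0, hk⟩).val + ∑ i ∈ Finset.univ.erase ⟨0, hk⟩, (u i).val :=
          (Finset.add_sum_erase _ _ (Finset.mem_univ _)).symm
        have e3 : ∑ i ∈ Finset.univ.erase ⟨0, hk⟩, (u' i).val
            = ∑ i ∈ Finset.univ.erase ⟨0, hk⟩, (u i).val := by
          refine Finset.sum_congr rfl fun x hx => ?_
          rw [hu', Function.update_of_ne (Finset.mem_erase.mp hx).1]
        have e4 : (u' ⟨0, hk⟩).val = (v ⟨0, hk⟩).val := by rw [hu', Function.update_self]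
        have e5 : (u ⟨0, hk⟩).val = (v ⟨k-1, hkm1⟩).val := by rw [hu0]
        have hvlt : (v ⟨0, hk⟩).val < (v ⟨k-1, hkm1⟩).val := hlt
        have hlt' : ∑ i, (u' i).val < s := by omega
        have hu'T : u' ∈ T := ih _ hlt' u' hu'S rfl
        have huT : u ∈ T := by
          refine hsufT u' hu'T u huS ?_
          intro i hi
          have hine : i ≠ (⟨0, hk⟩ : Fin k) := by
            intro h
            rw [h] at hi
            simp at hi
          rw [hu', Function.update_of_ne hine]
        have hrotu : rotW u = v := by
          rw [hu, ← Function.iterate_succ_apply' rotW (k-1) v,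
            show (k - 1).succ = k from by omega, rotW_iter_k]
        rw [← hrotu]
        exact hrotT u huT
  intro w hw
  exact key _ w hw rfl

end UC

/-- U-cycles of `k`-letter monotone words over `Fin n` exist for all `k, n ≥ 1`,
where a word is monotone if some cyclic rotation of it is non-decreasing. -/
theorem ucycle_monotone_words (k n : ℕ) (hk : 1 ≤ k) (hn : 1 ≤ n) :
    HasUCycle (wordsOf (fun w : Fin k → Fin n =>
      ∃ r : ℕ, Monotone fun i : Fin k => w ⟨(i.val + r) % k, Nat.mod_lt _ (by omega)⟩)) := by
  have hk' : 0 < k := hk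
  have hn' : 0 < n := hn
  have hSeq : (wordsOf (fun w : Fin k → Fin n =>
      ∃ r : ℕ, Monotone fun i : Fin k => w ⟨(i.val + r) % k, Nat.mod_lt _ (by omega)⟩))
      = wordsOf (UC.MonW hk') := rfl
  rw [hSeq]
  have hrotS : ∀ w ∈ wordsOf (UC.MonW hk' : (Fin k → Fin n) → Prop),
      UC.rotW w ∈ wordsOf (UC.MonW hk' : (Fin k → Fin n) → Prop) :=
    fun w hw => UC.mem_wordsOf.mpr (UC.monW_rot hk' (UC.mem_wordsOf.mp hw))
  have hc0 : (fun _ => (⟨0, hn'⟩ : Fin n)) ∈ wordsOf (UC.MonW hk' : (Fin k → Fin n) → Prop) := by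
    rw [UC.mem_wordsOf]
    exact ⟨0, monotone_const⟩
  exact UC.hasUCycle_of hk' hrotS _ hc0 (UC.connectivity hk' hn')
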